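/- If Z ∼ SN(λ), then Z² has a chi-squared distribution with one degree of freedom; equivalently, for every real λ, the pushforward of the SN(λ) measure under the map z ↦ z² coincides with the pushforward of the standard Gaussian measure under z ↦ z² (the Gamma(1/2, rate 1/2) distribution). -/

import Mathlib

open MeasureTheory ProbabilityTheory

/-- Standard normal density. -/
noncomputable def normPdf (x : ℝ) : ℝ := Real.exp (-x ^ 2 / 2) / Real.sqrt (2 * Real.pi)

/-- Standard normal cdf. -/
noncomputable def normCdf (x : ℝ) : ℝ := ∫ t in Set.Iic x, normPdf t

/-- The skew-normal measure `SN(l)`. -/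
noncomputable def snMeasure (l : ℝ) : Measure ℝ :=
  volume.withDensity fun x => ENNReal.ofReal (2 * normPdf x * normCdf (l * x))

open Real Set
open scoped ENNReal

lemma normPdf_nonneg (x : ℝ) : 0 ≤ normPdf x :=
  div_nonneg (Real.exp_nonneg _) (Real.sqrt_nonneg _)

lemma normPdf_neg (x : ℝ) : normPdf (-x) = normPdf x := by simp [normPdf, neg_sq]

lemma normPdf_eq (x : ℝ) : normPdf x = Real.exp (-(1/2) * x ^ 2) * (Real.sqrt (2 * Real.pi))⁻¹ := by
  rw [normPdf, div_eq_mul_inv]; ring_nf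

lemma integrable_normPdf : Integrable normPdf := by
  simp_rw [funext normPdf_eq]
  exact (integrable_exp_neg_mul_sq (by norm_num)).mul_const _

lemma integral_normPdf : ∫ x, normPdf x = 1 := by
  simp_rw [funext normPdf_eq]
  rw [integral_mul_const, integral_gaussian]
  rw [show Real.pi / (1/2) = 2 * Real.pi by ring]
  exact mul_inv_cancel₀ (Real.sqrt_ne_zero'.2 (by positivity))

lemma normCdf_nonneg (x : ℝ) : 0 ≤ normCdf x :=
  setIntegral_nonneg measurableSet_Iic fun t _ => normPdf_nonneg t

lemma normCdf_add_neg (x : ℝ) : normCdf x + normCdf (-x) = 1 := by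
  have h1 : normCdf (-x) = ∫ t in Ioi x, normPdf t := by
    calc normCdf (-x) = ∫ t in Iic (-x), normPdf (-t) := by
          simp only [normCdf, normPdf_neg]
      _ = ∫ t in Ioi (-(-x)), normPdf t := integral_comp_neg_Iic (-x) normPdf
      _ = ∫ t in Ioi x, normPdf t := by rw [neg_neg]
  rw [normCdf, h1, intervalIntegral.integral_Iic_add_Ioi integrable_normPdf.integrableOn
    integrable_normPdf.integrableOn, integral_normPdf]

lemma normCdf_mono : Monotone normCdf := fun x y hxy =>
  setIntegral_mono_set integrable_normPdf.integrableOn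
    (Filter.Eventually.of_forall fun t => normPdf_nonneg t)
    (HasSubset.Subset.eventuallyLE (Iic_subset_Iic.2 hxy))

lemma measurable_normCdf : Measurable normCdf := normCdf_mono.measurable

lemma measurable_normPdf : Measurable normPdf :=
  (((measurable_id.pow_const 2).neg.div_const 2).exp.div_const _)

lemma lintegral_neg_symm {E : Set ℝ} (hsymm : ∀ x, x ∈ E ↔ -x ∈ E) (f : ℝ → ℝ≥0∞) :
    ∫⁻ x in E, f (-x) = ∫⁻ x in E, f x := by
  have hmp : MeasurePreserving (Neg.neg : ℝ → ℝ) volume volume :=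
    Measure.measurePreserving_neg _
  have hemb : MeasurableEmbedding (Neg.neg : ℝ → ℝ) :=
    (Homeomorph.neg ℝ).measurableEmbedding
  have h := hmp.setLIntegral_comp_emb hemb f E
  have himg : Neg.neg '' E = E := by
    ext x
    constructor
    · rintro ⟨y, hy, rfl⟩; exact (hsymm y).1 hy
    · intro hx; exact ⟨-x, (hsymm x).1 hx, neg_neg x⟩
  rwa [himg] at h

lemma lintegral_image_eq_lintegral_abs_deriv_mul {s : Set ℝ} {f : ℝ → ℝ} {f' : ℝ → ℝ}
    (hs : MeasurableSet s) (hf' : ∀ x ∈ s, HasDerivWithinAt f (f' x) s x)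
    (hf : Set.InjOn f s) (g : ℝ → ℝ≥0∞) :
    ∫⁻ x in f '' s, g x = ∫⁻ x in s, ENNReal.ofReal |f' x| * g (f x) := by
  simpa only [ContinuousLinearMap.det_toSpanSingleton] using
    lintegral_image_eq_lintegral_abs_det_fderiv_mul volume hs
      (fun x hx => (hf' x hx).hasFDerivWithinAt) hf g

lemma measurable_sq : Measurable fun z : ℝ => z ^ 2 := measurable_id.pow_const 2

lemma gaussianPDF_eq_normPdf (x : ℝ) :
    gaussianPDF 0 1 x = ENNReal.ofReal (normPdf x) := by
  unfold gaussianPDF gaussianPDFReal normPdf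
  norm_num [div_eq_inv_mul]

lemma map_sq_sn (l : ℝ) :
    Measure.map (fun z : ℝ => z ^ 2) (snMeasure l) =
      Measure.map (fun z : ℝ => z ^ 2) (gaussianReal 0 1) := by
  ext s hs
  rw [Measure.map_apply measurable_sq hs, Measure.map_apply measurable_sq hs,
    snMeasure, gaussianReal_of_var_ne_zero 0 one_ne_zero,
    withDensity_apply _ (measurable_sq hs), withDensity_apply _ (measurable_sq hs)]
  set E := (fun z : ℝ => z ^ 2) ⁻¹' s with hE
  have hsymm : ∀ x, x ∈ E ↔ -x ∈ E := by
    intro x; simp [hE, Set.mem_preimage, neg_sq]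
  set g : ℝ → ℝ≥0∞ := fun x => ENNReal.ofReal (2 * normPdf x * normCdf (l * x)) with hg
  have hgm : Measurable g :=
    ((measurable_const.mul measurable_normPdf).mul
      (measurable_normCdf.comp (measurable_const_mul l))).ennreal_ofReal
  have hsum : ∀ x, g x + g (-x) = 2 * ENNReal.ofReal (normPdf x) := by
    intro x
    have h1 : (0:ℝ) ≤ 2 * normPdf x * normCdf (l * x) :=
      mul_nonneg (mul_nonneg (by norm_num) (normPdf_nonneg x)) (normCdf_nonneg _)
    have h2 : (0:ℝ) ≤ 2 * normPdf (-x) * normCdf (l * -x) :=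
      mul_nonneg (mul_nonneg (by norm_num) (normPdf_nonneg _)) (normCdf_nonneg _)
    rw [hg, ← ENNReal.ofReal_add h1 h2]
    have key : 2 * normPdf x * normCdf (l * x) + 2 * normPdf (-x) * normCdf (l * -x)
        = 2 * normPdf x := by
      rw [normPdf_neg, mul_neg]
      linear_combination 2 * normPdf x * normCdf_add_neg (l * x)
    rw [key, ENNReal.ofReal_mul (by norm_num : (0:ℝ) ≤ 2)]
    norm_num
  have h2 : 2 * ∫⁻ x in E, g x = 2 * ∫⁻ x in E, ENNReal.ofReal (normPdf x) := by
    calc 2 * ∫⁻ x in E, g x = (∫⁻ x in E, g x) + ∫⁻ x in E, g x := two_mul _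
      _ = (∫⁻ x in E, g x) + ∫⁻ x in E, g (-x) := by
          rw [lintegral_neg_symm hsymm g]
      _ = ∫⁻ x in E, (g x + g (-x)) := by
          rw [lintegral_add_left hgm]
      _ = ∫⁻ x in E, 2 * ENNReal.ofReal (normPdf x) := by simp_rw [hsum]
      _ = 2 * ∫⁻ x in E, ENNReal.ofReal (normPdf x) := by
          rw [lintegral_const_mul' _ _ (by norm_num)]
  have := (ENNReal.mul_right_inj (by norm_num) (by norm_num)).1 h2
  simpa [gaussianPDF_eq_normPdf] using this

lemma map_sq_gauss :
    Measure.map (fun z : ℝ => z ^ 2) (gaussianReal 0 1) = gammaMeasure (1/2) (1/2) := by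
  ext s hs
  rw [Measure.map_apply measurable_sq hs, gaussianReal_of_var_ne_zero 0 one_ne_zero,
    withDensity_apply _ (measurable_sq hs), gammaMeasure, withDensity_apply _ hs]
  set E := (fun z : ℝ => z ^ 2) ⁻¹' s with hE
  have hEm : MeasurableSet E := measurable_sq hs
  have hsymm : ∀ x, x ∈ E ↔ -x ∈ E := fun x => by simp [hE, neg_sq]
  set s' := s ∩ Ioi 0 with hs'def
  have hs' : MeasurableSet s' := hs.inter measurableSet_Ioi
  -- restrict the gamma side to positive reals
  have hR : ∫⁻ y in s, gammaPDF (1/2) (1/2) y = ∫⁻ y in s', gammaPDF (1/2) (1/2) y := by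
    have hind : ∀ y, gammaPDF (1/2) (1/2) y
        = (Ioi (0:ℝ)).indicator (gammaPDF (1/2) (1/2)) y := by
      intro y
      by_cases hy : y ∈ Ioi (0:ℝ)
      · rw [Set.indicator_of_mem hy]
      · rw [Set.indicator_of_notMem hy]
        rcases lt_or_eq_of_le (not_lt.1 (by simpa using hy)) with h | h
        · exact gammaPDF_of_neg h
        · rw [h, gammaPDF_of_nonneg le_rfl,
            Real.zero_rpow (by norm_num : (1/2 : ℝ) - 1 ≠ 0)]
          simp
    calc ∫⁻ y in s, gammaPDF (1/2) (1/2) y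
        = ∫⁻ y in s, (Ioi (0:ℝ)).indicator (gammaPDF (1/2) (1/2)) y :=
          lintegral_congr fun y => hind y
      _ = ∫⁻ y in s', gammaPDF (1/2) (1/2) y := by
          rw [lintegral_indicator measurableSet_Ioi,
            Measure.restrict_restrict measurableSet_Ioi, Set.inter_comm]
  -- the two halves of the gaussian side agree
  have hhalf : ∫⁻ x in E ∩ Iio 0, ENNReal.ofReal (normPdf x)
      = ∫⁻ x in E ∩ Ioi 0, ENNReal.ofReal (normPdf x) := by
    have h := (Measure.measurePreserving_neg (volume : Measure ℝ)).setLIntegral_comp_emb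
      (Homeomorph.neg ℝ).measurableEmbedding
      (fun x => ENNReal.ofReal (normPdf x)) (E ∩ Ioi 0)
    have himg2 : Neg.neg '' (E ∩ Ioi 0) = E ∩ Iio 0 := by
      ext x
      constructor
      · rintro ⟨y, ⟨hyE, hy0⟩, rfl⟩
        exact ⟨(hsymm y).1 hyE, show -y < 0 from neg_lt_zero.2 hy0⟩
      · rintro ⟨hxE, hx0⟩
        exact ⟨-x, ⟨(hsymm x).1 hxE, by simpa using hx0⟩, neg_neg x⟩
    simp only [normPdf_neg] at h
    rw [himg2] at h
    exact h.symm
  -- split E into the two halves (up to the null set {0})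
  have hae : E =ᵐ[volume] (((E ∩ Iio 0) ∪ (E ∩ Ioi 0)) : Set ℝ) := by
    rw [MeasureTheory.ae_eq_set]
    constructor
    · refine measure_mono_null (fun x hx => ?_) (measure_singleton (0:ℝ))
      obtain ⟨hxE, hxn⟩ := hx
      simp only [Set.mem_union, Set.mem_inter_iff, Set.mem_Iio, Set.mem_Ioi, not_or,
        not_and] at hxn
      rcases lt_trichotomy x 0 with h | h | h
      · exact absurd h (hxn.1 hxE)
      · exact h
      · exact absurd h (hxn.2 hxE)
    · have hsub : ((E ∩ Iio 0) ∪ (E ∩ Ioi 0)) \ E = ∅ := by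
        rw [Set.diff_eq_empty]
        exact Set.union_subset Set.inter_subset_left Set.inter_subset_left
      rw [hsub]
      simp
  have hsplit : ∫⁻ x in E, ENNReal.ofReal (normPdf x)
      = 2 * ∫⁻ x in E ∩ Ioi 0, ENNReal.ofReal (normPdf x) := by
    rw [setLIntegral_congr hae,
      lintegral_union (hEm.inter measurableSet_Ioi)
        (Set.disjoint_left.2 (by rintro x ⟨_, h1⟩ ⟨_, h2⟩; exact absurd (h1.trans h2) (lt_irrefl x))),
      hhalf, two_mul]
  -- identify E ∩ Ioi 0 with the image of s' under sqrt
  have himg : Real.sqrt '' s' = E ∩ Ioi 0 := by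
    ext x
    constructor
    · rintro ⟨y, ⟨hys, hy0⟩, rfl⟩
      refine ⟨?_, Real.sqrt_pos.2 hy0⟩
      simp only [hE, Set.mem_preimage]
      rwa [Real.sq_sqrt (le_of_lt hy0)]
    · rintro ⟨hxE, hx0⟩
      exact ⟨x ^ 2, ⟨hxE, show 0 < x ^ 2 from pow_pos hx0 2⟩, Real.sqrt_sq (le_of_lt hx0)⟩
  -- change of variables
  have hderiv : ∀ y ∈ s', HasDerivWithinAt Real.sqrt (1 / (2 * Real.sqrt y)) s' y :=
    fun y hy => (Real.hasDerivAt_sqrt (ne_of_gt hy.2)).hasDerivWithinAt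
  have hinj : Set.InjOn Real.sqrt s' :=
    fun a ha b hb h => (Real.sqrt_inj ha.2.le hb.2.le).1 h
  simp_rw [gaussianPDF_eq_normPdf]
  rw [hsplit, hR, ← himg,
    _root_.lintegral_image_eq_lintegral_abs_deriv_mul hs' hderiv hinj,
    ← lintegral_const_mul' _ _ (by norm_num : (2 : ℝ≥0∞) ≠ ⊤)]
  refine setLIntegral_congr_fun hs' (fun y hy => ?_)
  have hy0 : 0 < y := hy.2
  have hsy : (0:ℝ) < Real.sqrt y := Real.sqrt_pos.2 hy0
  rw [abs_of_nonneg (by positivity), gammaPDF_of_nonneg hy0.le,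
    ← ENNReal.ofReal_mul (by positivity),
    show (2 : ℝ≥0∞) = ENNReal.ofReal 2 by simp,
    ← ENNReal.ofReal_mul (by norm_num)]
  congr 1
  rw [normPdf, Real.sq_sqrt hy0.le, Real.Gamma_one_half_eq,
    show ((1:ℝ)/2 - 1) = -(1/2) by norm_num, Real.rpow_neg hy0.le,
    ← Real.sqrt_eq_rpow, ← Real.sqrt_eq_rpow,
    Real.sqrt_mul (by norm_num : (0:ℝ) ≤ 2) Real.pi,
    show ((1:ℝ)/2) = 2⁻¹ by norm_num, Real.sqrt_inv,
    show (-(2⁻¹ * y) : ℝ) = -y/2 by ring]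
  have h2 : Real.sqrt 2 ≠ 0 := by positivity
  have hpi : Real.sqrt Real.pi ≠ 0 := by positivity
  field_simp

/-- If `Z ∼ SN(l)` then `Z²` is chi-squared with one degree of freedom: the
pushforward of `SN(l)` under `z ↦ z²` coincides with the pushforward of the
standard Gaussian under `z ↦ z²`, which is the Gamma(1/2, rate 1/2) distribution. -/
theorem sn_sq_chiSq (l : ℝ) :
    Measure.map (fun z : ℝ => z ^ 2) (snMeasure l) =
      Measure.map (fun z : ℝ => z ^ 2) (gaussianReal 0 1) ∧
    Measure.map (fun z : ℝ => z ^ 2) (snMeasure l) = gammaMeasure (1/2) (1/2) :=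
  ⟨map_sq_sn l, (map_sq_sn l).trans map_sq_gauss⟩
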